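/- Let G be a group acting on ℝ³ by affine isometries, let X be a set with a G-action ρ, and let Σ ⊆ X be a subset. Let ξ₂, ξ₃ ∈ ℝ³ be linearly independent vectors that lie in G (i.e. the translations by ξ₂ and ξ₃ belong to G) and satisfy ρ(ξ₂)(Σ) = Σ = ρ(ξ₃)(Σ). Let q ∈ ℝ³, let P := q + ℝξ₂ + ℝξ₃ be the affine plane through q spanned by ξ₂, ξ₃, and let ⟨ξ₂, ξ₃⟩_ℤ act on (ℝξ₂ + ℝξ₃) × Σ by ξ·(y, s) = (y + ξ, ρ(ξ)(s)). Consider the well-defined map ι_q from the quotient ((ℝξ₂ + ℝξ₃) × Σ)/⟨ξ₂, ξ₃⟩_ℤ to the quotient (ℝ³ × X)/G (for the diagonal G-action g·(p, x) = (g·p, ρ(g)(x))) given by ι_q([y, s]) = [q + y, s]. If every g ∈ G with ρ(g)(Σ) ∩ Σ ≠ ∅ satisfies either g ∈ ⟨ξ₂, ξ₃⟩_ℤ or g·P ∩ P = ∅, then ι_q is injective. -/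
import Mathlib


noncomputable abbrev E3 := EuclideanSpace ℝ (Fin 3)

/-- Translation by a vector, as an isometry of ℝ³. -/
noncomputable def transl (v : E3) : E3 ≃ᵢ E3 :=
  ⟨Equiv.addLeft v, Isometry.of_dist_eq fun x y => by simp [dist_add_left]⟩

/-- Embeddedness criterion of Example 3.2 of the paper, formulated
set-theoretically: injectivity of ι_q. -/
theorem stmt10 (G : Subgroup (E3 ≃ᵢ E3)) (X : Type*) (ρ : G →* Equiv.Perm X)
    (Sig : Set X) (ξ₂ ξ₃ : E3)
    (hindep : LinearIndependent ℝ ![ξ₂, ξ₃])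
    (hξ₂ : transl ξ₂ ∈ G) (hξ₃ : transl ξ₃ ∈ G)
    (hSig₂ : ⇑(ρ ⟨transl ξ₂, hξ₂⟩) '' Sig = Sig)
    (hSig₃ : ⇑(ρ ⟨transl ξ₃, hξ₃⟩) '' Sig = Sig)
    (q : E3)
    -- P is the affine plane through q spanned by ξ₂ and ξ₃
    (P : Set E3) (hP : P = (fun y => q + y) '' (Submodule.span ℝ {ξ₂, ξ₃} : Set E3))
    -- main hypothesis: every g ∈ G with ρ(g)(Σ) ∩ Σ ≠ ∅ lies in ⟨ξ₂, ξ₃⟩_ℤ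
    -- or moves P off itself
    (hmain : ∀ g : G, (⇑(ρ g) '' Sig ∩ Sig).Nonempty →
      (∃ m n : ℤ, (g : E3 ≃ᵢ E3) = transl (m • ξ₂ + n • ξ₃)) ∨
      (∀ p ∈ P, (g : E3 ≃ᵢ E3) p ∉ P)) :
    -- conclusion: ι_q : ((ℝξ₂+ℝξ₃) × Σ)/⟨ξ₂,ξ₃⟩_ℤ → (ℝ³ × X)/G is injective
    ∀ y ∈ (Submodule.span ℝ {ξ₂, ξ₃} : Set E3), ∀ y' ∈ (Submodule.span ℝ {ξ₂, ξ₃} : Set E3),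
    ∀ s ∈ Sig, ∀ s' ∈ Sig, ∀ g : G,
      (g : E3 ≃ᵢ E3) (q + y) = q + y' → ρ g s = s' →
      ∃ h : G, (∃ m n : ℤ, (h : E3 ≃ᵢ E3) = transl (m • ξ₂ + n • ξ₃) ∧
          y' = y + (m • ξ₂ + n • ξ₃)) ∧ ρ h s = s' := by
  intro y hy y' hy' s hs s' hs' g hgy hgs
  rcases hmain g ⟨s', ⟨s, hs, hgs⟩, hs'⟩ with ⟨m, n, hg⟩ | hmove
  · refine ⟨g, ⟨m, n, hg, ?_⟩, hgs⟩
    rw [hg] at hgy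
    have : (m • ξ₂ + n • ξ₃) + (q + y) = q + y' := hgy
    have h2 : q + (y + (m • ξ₂ + n • ξ₃)) = q + y' := by
      rw [← this]; abel
    exact (add_left_cancel h2).symm
  · exfalso
    exact hmove (q + y) (hP ▸ ⟨y, hy, rfl⟩) (hgy ▸ hP ▸ ⟨y', hy', rfl⟩)
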